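/- Fix an integer d ≥ 1 and β ∈ (0,d). There exists a constant K, depending only on d and β, such that for all ε ∈ (0,1], all 0 < t₂ ≤ t₁ ≤ ε², and all a₁, a₂ ∈ ℝ^d, (t₁ t₂)^{−1} ∫_{ℝ^d} ∫_{ℝ^d} exp(−‖z₁−a₁‖²/(2t₁)) exp(−‖z₂−a₂‖²/(2t₂)) ‖z₁−z₂‖^{−β} dz₁ dz₂ ≤ K ε^{2d−2} t₁^{−(1+β)/2} t₂^{−1/2}. -/

import Mathlib

open MeasureTheory Metric ENNReal

open MeasureTheory

lemma riesz_ball_bound (d : ℕ) (hd : 1 ≤ d) (β : ℝ) (hβ0 : 0 < β) (hβd : β < d) :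
    ∃ C : ℝ≥0∞, C ≠ ∞ ∧ ∀ r : ℝ, 0 < r →
      (∫⁻ x in Metric.ball (0 : EuclideanSpace ℝ (Fin d)) r, ENNReal.ofReal (‖x‖ ^ (-β))) ≤
        ENNReal.ofReal (r ^ ((d : ℝ) - β)) * C := by
  haveI : Nonempty (Fin d) := ⟨⟨0, hd⟩⟩
  set E := EuclideanSpace ℝ (Fin d)
  set V : ℝ≥0∞ := volume (Metric.ball (0 : E) 1) with hVdef
  have hV : V ≠ ∞ := measure_ball_lt_top.ne
  set q : ℝ := (2 : ℝ) ^ (β - (d : ℝ)) with hqdef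
  have hq0 : 0 < q := Real.rpow_pos_of_pos two_pos _
  have hq1 : q < 1 := Real.rpow_lt_one_of_one_lt_of_neg one_lt_two (by linarith)
  refine ⟨ENNReal.ofReal ((2:ℝ) ^ β) * (1 - ENNReal.ofReal q)⁻¹ * V, ?_, ?_⟩
  · apply ENNReal.mul_ne_top (ENNReal.mul_ne_top ofReal_ne_top ?_) hV
    rw [ENNReal.inv_ne_top]
    simp [tsub_eq_zero_iff_le, ENNReal.one_le_ofReal, not_le, hq1]
  intro r hr
  set ρ : ℕ → ℝ := fun n => r * (2:ℝ)⁻¹ ^ n with hρdef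
  have hρpos : ∀ n, 0 < ρ n := fun n => mul_pos hr (pow_pos (by norm_num) n)
  set S : ℕ → Set E := fun n => Metric.closedBall 0 (ρ n) \ Metric.closedBall 0 (ρ (n+1)) with hSdef
  have cover : Metric.ball (0 : E) r ⊆ {0} ∪ ⋃ n, S n := by
    intro x hx
    rcases eq_or_ne x 0 with h0 | h0
    · exact Or.inl h0
    right
    have hxn : 0 < ‖x‖ := norm_pos_iff.2 h0
    have hxr : ‖x‖ < r := by simpa [mem_ball_zero_iff] using hx
    have hex : ∃ n, ρ (n + 1) < ‖x‖ := by
      obtain ⟨n, hn⟩ := exists_pow_lt_of_lt_one (div_pos hxn hr) (by norm_num : (2:ℝ)⁻¹ < 1)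
      exact ⟨n, by
        have := (mul_lt_mul_iff_right₀ hr).2 hn
        rw [mul_div_cancel₀ _ hr.ne'] at this
        calc ρ (n+1) ≤ ρ n := by
              simp only [hρdef, pow_succ]
              nlinarith [pow_pos (show (0:ℝ) < 2⁻¹ by norm_num) n]
          _ < ‖x‖ := this⟩
    classical
    let n₀ := Nat.find hex
    have h1 : ρ (n₀ + 1) < ‖x‖ := Nat.find_spec hex
    have h2 : ‖x‖ ≤ ρ n₀ := by
      rcases Nat.eq_zero_or_pos n₀ with h | h
      · simp only [h, hρdef]; simpa using hxr.le
      · have := Nat.find_min hex (Nat.sub_lt h one_pos)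
        have h' : Nat.find hex - 1 + 1 = Nat.find hex := Nat.sub_add_cancel h
        rw [h'] at this
        exact not_lt.1 this
    exact Set.mem_iUnion.2 ⟨n₀, by
      simp only [hSdef, Set.mem_diff, Metric.mem_closedBall, dist_zero_right, not_le]
      exact ⟨h2, h1⟩⟩
  have hmeasS : ∀ n, MeasurableSet (S n) := fun n =>
    measurableSet_closedBall.diff measurableSet_closedBall
  have hrw : ∀ m : ℕ, ρ m = r * (2:ℝ) ^ (-(m:ℝ)) := by
    intro m
    rw [hρdef, Real.rpow_neg (by norm_num), Real.rpow_natCast, ← inv_pow]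
  have shell_bound : ∀ n, (∫⁻ x in S n, ENNReal.ofReal (‖x‖ ^ (-β))) ≤
      ENNReal.ofReal (ρ (n+1) ^ (-β)) * (ENNReal.ofReal (ρ n ^ d) * V) := by
    intro n
    have hb : ∀ x ∈ S n, ENNReal.ofReal (‖x‖ ^ (-β)) ≤ ENNReal.ofReal (ρ (n+1) ^ (-β)) := by
      intro x hx
      rcases hx with ⟨_, hx2⟩
      have hlt : ρ (n+1) < ‖x‖ := by
        simpa [Metric.mem_closedBall, dist_zero_right, not_le] using hx2
      exact ENNReal.ofReal_le_ofReal
        (Real.rpow_le_rpow_of_nonpos (hρpos (n+1)) hlt.le (by linarith))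
    calc (∫⁻ x in S n, ENNReal.ofReal (‖x‖ ^ (-β)))
        ≤ ∫⁻ _ in S n, ENNReal.ofReal (ρ (n+1) ^ (-β)) :=
          setLIntegral_mono measurable_const hb
      _ = ENNReal.ofReal (ρ (n+1) ^ (-β)) * volume (S n) := setLIntegral_const _ _
      _ ≤ _ := by
          gcongr
          calc volume (S n) ≤ volume (Metric.closedBall (0:E) (ρ n)) :=
                measure_mono Set.diff_subset
            _ = ENNReal.ofReal (ρ n ^ d) * V := by
                rw [Measure.addHaar_closedBall _ _ (hρpos n).le]
                congr
                exact finrank_euclideanSpace_fin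
  have term_eq : ∀ n : ℕ, ENNReal.ofReal (ρ (n+1) ^ (-β)) * (ENNReal.ofReal (ρ n ^ d) * V)
      = ENNReal.ofReal (r ^ ((d:ℝ) - β) * (2:ℝ) ^ β) * ENNReal.ofReal q ^ n * V := by
    intro n
    rw [← mul_assoc, ← ENNReal.ofReal_pow hq0.le, ← ENNReal.ofReal_mul (by positivity),
      ← ENNReal.ofReal_mul (by positivity)]
    congr 2
    have h2 : (0:ℝ) < 2 := two_pos
    rw [hrw (n+1), hrw n, Real.mul_rpow hr.le (Real.rpow_nonneg h2.le _),
      mul_pow, ← Real.rpow_natCast r d, ← Real.rpow_natCast ((2:ℝ) ^ (-((n:ℕ):ℝ))) d,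
      ← Real.rpow_mul h2.le, ← Real.rpow_mul h2.le, hqdef,
      ← Real.rpow_natCast ((2:ℝ) ^ (β - (d:ℝ))) n, ← Real.rpow_mul h2.le,
      mul_mul_mul_comm, ← Real.rpow_add hr, ← Real.rpow_add h2,
      mul_assoc, ← Real.rpow_add h2]
    congr 1
    · congr 1; push_cast; ring
    · congr 1; push_cast; ring
  calc (∫⁻ x in Metric.ball (0 : E) r, ENNReal.ofReal (‖x‖ ^ (-β)))
      ≤ ∫⁻ x in ({(0:E)} ∪ ⋃ n, S n), ENNReal.ofReal (‖x‖ ^ (-β)) :=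
        lintegral_mono_set cover
    _ ≤ (∫⁻ x in ({(0:E)} : Set E), ENNReal.ofReal (‖x‖ ^ (-β)))
        + ∫⁻ x in (⋃ n, S n), ENNReal.ofReal (‖x‖ ^ (-β)) := lintegral_union_le _ _ _
    _ ≤ 0 + ∑' n, ∫⁻ x in S n, ENNReal.ofReal (‖x‖ ^ (-β)) := by
        gcongr
        · exact le_of_eq (setLIntegral_measure_zero _ _ (measure_singleton 0))
        · exact lintegral_iUnion_le _ _
    _ ≤ ∑' n, ENNReal.ofReal (ρ (n+1) ^ (-β)) * (ENNReal.ofReal (ρ n ^ d) * V) := by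
        rw [zero_add]; exact ENNReal.tsum_le_tsum shell_bound
    _ = ENNReal.ofReal (r ^ ((d:ℝ) - β) * (2:ℝ) ^ β) * (∑' n : ℕ, ENNReal.ofReal q ^ n) * V := by
        simp_rw [term_eq, ENNReal.tsum_mul_right, ENNReal.tsum_mul_left]
    _ = ENNReal.ofReal (r ^ ((d:ℝ) - β)) *
          (ENNReal.ofReal ((2:ℝ) ^ β) * (1 - ENNReal.ofReal q)⁻¹ * V) := by
        rw [ENNReal.tsum_geometric, ENNReal.ofReal_mul (by positivity)]
        ring

lemma gauss_integrable (d : ℕ) (t : ℝ) (ht : 0 < t) :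
    Integrable (fun v : EuclideanSpace ℝ (Fin d) => Real.exp (-(2*t)⁻¹ * ‖v‖ ^ 2)) := by
  have hb : (0:ℝ) < (2*t)⁻¹ := by positivity
  have hc := (GaussianFourier.integrable_cexp_neg_mul_sq_norm_add
    (b := ((2*t)⁻¹ : ℂ)) (by simpa using hb) 0 (0 : EuclideanSpace ℝ (Fin d))).norm
  refine hc.congr (Filter.Eventually.of_forall fun v => ?_)
  simp [Complex.norm_exp]
  left; norm_cast

lemma gauss_lintegral (d : ℕ) (t : ℝ) (ht : 0 < t) (a : EuclideanSpace ℝ (Fin d)) :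
    (∫⁻ z : EuclideanSpace ℝ (Fin d), ENNReal.ofReal (Real.exp (-‖z - a‖ ^ 2 / (2 * t)))) =
      ENNReal.ofReal ((2 * Real.pi * t) ^ ((d : ℝ) / 2)) := by
  have hb : (0:ℝ) < (2*t)⁻¹ := by positivity
  have hexp : ∀ x : ℝ, -x / (2*t) = -(2*t)⁻¹ * x := fun x => by field_simp
  have hint : Integrable (fun z : EuclideanSpace ℝ (Fin d) =>
      Real.exp (-‖z - a‖ ^ 2 / (2 * t))) := by
    simp_rw [hexp]
    exact (gauss_integrable d t ht).comp_sub_right a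
  rw [← ofReal_integral_eq_lintegral_ofReal hint
    (Filter.Eventually.of_forall fun z => (Real.exp_pos _).le)]
  congr 1
  simp_rw [hexp]
  rw [integral_sub_right_eq_self (fun z : EuclideanSpace ℝ (Fin d) =>
    Real.exp (-(2*t)⁻¹ * ‖z‖ ^ 2)) a]
  rw [GaussianFourier.integral_rexp_neg_mul_sq_norm hb]
  congr 1
  · field_simp
  · rw [finrank_euclideanSpace_fin]

set_option maxHeartbeats 1000000 in
/-- the term `U₂`: there is `K` depending only on `d` and `β`
such that for all `ε ∈ (0,1]`, `0 < t₂ ≤ t₁ ≤ ε²` and `a₁, a₂ ∈ ℝ^d`,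
`(t₁t₂)^{−1} ∫∫ e^{−‖z₁−a₁‖²/(2t₁)} e^{−‖z₂−a₂‖²/(2t₂)} ‖z₁−z₂‖^{−β} dz₁ dz₂
  ≤ K ε^{2d−2} t₁^{−(1+β)/2} t₂^{−1/2}`. -/
theorem stmt_11 (d : ℕ) (hd : 1 ≤ d) (β : ℝ) (hβ0 : 0 < β) (hβd : β < d) :
    ∃ K : ℝ, 0 < K ∧ ∀ ε ∈ Set.Ioc (0 : ℝ) 1, ∀ t₁ t₂ : ℝ,
      0 < t₂ → t₂ ≤ t₁ → t₁ ≤ ε ^ 2 → ∀ a₁ a₂ : EuclideanSpace ℝ (Fin d),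
        (t₁ * t₂)⁻¹ * (∫ z₁ : EuclideanSpace ℝ (Fin d), ∫ z₂ : EuclideanSpace ℝ (Fin d),
            Real.exp (-‖z₁ - a₁‖ ^ 2 / (2 * t₁)) * Real.exp (-‖z₂ - a₂‖ ^ 2 / (2 * t₂)) *
              ‖z₁ - z₂‖ ^ (-β)) ≤
          K * ε ^ (2 * d - 2) * t₁ ^ (-(1 + β) / 2) * t₂ ^ (-(1 : ℝ) / 2) := by
  obtain ⟨C, hCtop, hC⟩ := riesz_ball_bound d hd β hβ0 hβd
  set π := Real.pi
  have hπ : 0 < 2 * π := by positivity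
  set Cr : ℝ := C.toReal with hCrdef
  have hCr : 0 ≤ Cr := ENNReal.toReal_nonneg
  set P : ℝ := (2 * π) ^ ((d : ℝ) / 2) with hPdef
  have hP : 0 < P := Real.rpow_pos_of_pos hπ _
  set E := EuclideanSpace ℝ (Fin d)
  refine ⟨P * (Cr + P), by positivity, ?_⟩
  rintro ε ⟨hε0, hε1⟩ t₁ t₂ ht₂ ht21 ht1ε a₁ a₂
  have ht₁ : 0 < t₁ := lt_of_lt_of_le ht₂ ht21
  set b₁ : E → ℝ := fun z => Real.exp (-‖z - a₁‖ ^ 2 / (2 * t₁)) with hb₁def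
  set b₂ : E → ℝ := fun z => Real.exp (-‖z - a₂‖ ^ 2 / (2 * t₂)) with hb₂def
  have hb₁pos : ∀ z, 0 < b₁ z := fun z => Real.exp_pos _
  have hb₂pos : ∀ z, 0 < b₂ z := fun z => Real.exp_pos _
  have hb₁le : ∀ z, b₁ z ≤ 1 := fun z => Real.exp_le_one_iff.2 (by
    apply div_nonpos_of_nonpos_of_nonneg
    · simp [sq_nonneg]
    · positivity)
  -- measurability
  have hb₁meas : Measurable b₁ := (Real.continuous_exp.comp (by fun_prop)).measurable
  have hb₂meas : Measurable b₂ := (Real.continuous_exp.comp (by fun_prop)).measurable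
  have hKer : Measurable fun p : E × E => ‖p.1 - p.2‖ ^ (-β) :=
    (continuous_fst.sub continuous_snd).norm.measurable.pow_const _
  have hFmeas : Measurable fun p : E × E => ENNReal.ofReal (b₁ p.1 * b₂ p.2 * ‖p.1 - p.2‖ ^ (-β)) :=
    (((hb₁meas.comp measurable_fst).mul (hb₂meas.comp measurable_snd)).mul hKer).ennreal_ofReal
  have hfnonneg : ∀ z₁ z₂ : E, 0 ≤ b₁ z₁ * b₂ z₂ * ‖z₁ - z₂‖ ^ (-β) := fun z₁ z₂ => by
    have := Real.rpow_nonneg (norm_nonneg (z₁ - z₂)) (-β)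
    positivity
  -- constants
  set R : ℝ := Real.sqrt t₁ with hRdef
  have hR : 0 < R := Real.sqrt_pos.2 ht₁
  set G₁ : ℝ≥0∞ := ENNReal.ofReal ((2 * π * t₁) ^ ((d : ℝ) / 2)) with hG₁def
  set G₂ : ℝ≥0∞ := ENNReal.ofReal ((2 * π * t₂) ^ ((d : ℝ) / 2)) with hG₂def
  set B₁ : ℝ≥0∞ := ENNReal.ofReal (R ^ ((d : ℝ) - β)) * C
      + ENNReal.ofReal (t₁ ^ (-β / 2)) * G₁ with hB₁def
  have hB₁top : B₁ ≠ ∞ := by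
    simp only [hB₁def]
    exact ENNReal.add_ne_top.2 ⟨ENNReal.mul_ne_top ofReal_ne_top hCtop,
      ENNReal.mul_ne_top ofReal_ne_top ofReal_ne_top⟩
  have hg₀meas : Measurable fun x : E => ENNReal.ofReal (‖x‖ ^ (-β)) :=
    (measurable_norm.pow_const _).ennreal_ofReal
  -- inner bound
  have inner_bound : ∀ z : E,
      (∫⁻ z₁ : E, ENNReal.ofReal (b₁ z₁ * ‖z₁ - z‖ ^ (-β))) ≤ B₁ := by
    intro z
    have hpoint : ∀ z₁ : E, ENNReal.ofReal (b₁ z₁ * ‖z₁ - z‖ ^ (-β)) ≤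
        (Metric.ball z R).indicator (fun z₁ => ENNReal.ofReal (‖z₁ - z‖ ^ (-β))) z₁
          + ENNReal.ofReal (t₁ ^ (-β / 2) * b₁ z₁) := by
      intro z₁
      by_cases hz : z₁ ∈ Metric.ball z R
      · rw [Set.indicator_of_mem hz]
        refine le_trans ?_ le_self_add
        exact ENNReal.ofReal_le_ofReal
          (mul_le_of_le_one_left (Real.rpow_nonneg (norm_nonneg _) _) (hb₁le z₁))
      · rw [Set.indicator_of_notMem hz, zero_add]
        apply ENNReal.ofReal_le_ofReal
        have hzz : R ≤ ‖z₁ - z‖ := by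
          have := (Metric.mem_ball.not.1 hz)
          rw [dist_eq_norm] at this
          linarith [not_lt.1 this]
        have h1 : ‖z₁ - z‖ ^ (-β) ≤ R ^ (-β) :=
          Real.rpow_le_rpow_of_nonpos hR hzz (by linarith)
        have h2 : R ^ (-β) = t₁ ^ (-β / 2) := by
          rw [hRdef, Real.sqrt_eq_rpow, ← Real.rpow_mul ht₁.le]
          congr 1; ring
        calc b₁ z₁ * ‖z₁ - z‖ ^ (-β) ≤ b₁ z₁ * R ^ (-β) :=
              mul_le_mul_of_nonneg_left h1 (hb₁pos z₁).le
          _ = t₁ ^ (-β / 2) * b₁ z₁ := by rw [h2]; ring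
    have hindmeas : Measurable ((Metric.ball z R).indicator
        (fun z₁ => ENNReal.ofReal (‖z₁ - z‖ ^ (-β)))) := by
      apply Measurable.indicator _ measurableSet_ball
      exact ((measurable_id.sub_const z).norm.pow_const _).ennreal_ofReal
    calc (∫⁻ z₁ : E, ENNReal.ofReal (b₁ z₁ * ‖z₁ - z‖ ^ (-β)))
        ≤ ∫⁻ z₁ : E, ((Metric.ball z R).indicator
            (fun z₁ => ENNReal.ofReal (‖z₁ - z‖ ^ (-β))) z₁
            + ENNReal.ofReal (t₁ ^ (-β / 2) * b₁ z₁)) := lintegral_mono hpoint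
      _ = (∫⁻ z₁ : E, (Metric.ball z R).indicator
            (fun z₁ => ENNReal.ofReal (‖z₁ - z‖ ^ (-β))) z₁)
            + ∫⁻ z₁ : E, ENNReal.ofReal (t₁ ^ (-β / 2) * b₁ z₁) :=
          lintegral_add_left hindmeas _
      _ ≤ B₁ := by
          rw [hB₁def]
          gcongr
          · -- translated ball integral
            have hrw : (fun z₁ : E => (Metric.ball z R).indicator
                (fun z₁ => ENNReal.ofReal (‖z₁ - z‖ ^ (-β))) z₁)
                = fun z₁ : E => ((Metric.ball (0:E) R).indicator
                    (fun x => ENNReal.ofReal (‖x‖ ^ (-β)))) (z₁ - z) := by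
              funext z₁
              by_cases h : z₁ ∈ Metric.ball z R
              · rw [Set.indicator_of_mem h, Set.indicator_of_mem (by
                  rw [mem_ball_zero_iff, ← dist_eq_norm]; exact Metric.mem_ball.1 h)]
              · rw [Set.indicator_of_notMem h, Set.indicator_of_notMem (by
                  rw [mem_ball_zero_iff, ← dist_eq_norm]
                  exact fun hh => h (Metric.mem_ball.2 hh))]
            rw [hrw, lintegral_sub_right_eq_self (fun z₁ : E => ((Metric.ball (0:E) R).indicator
                    (fun x => ENNReal.ofReal (‖x‖ ^ (-β)))) z₁) z,
              lintegral_indicator measurableSet_ball]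
            exact hC R hR
          · -- gaussian part
            have : ∀ z₁ : E, ENNReal.ofReal (t₁ ^ (-β / 2) * b₁ z₁)
                = ENNReal.ofReal (t₁ ^ (-β / 2)) * ENNReal.ofReal (b₁ z₁) := fun z₁ =>
              ENNReal.ofReal_mul (Real.rpow_nonneg ht₁.le _)
            simp_rw [this]
            rw [lintegral_const_mul' _ _ ofReal_ne_top, hG₁def, hb₁def,
              gauss_lintegral d t₁ ht₁ a₁]
  -- the swapped double lintegral bound
  have swapped_bound : (∫⁻ z₂ : E, ∫⁻ z₁ : E,
      ENNReal.ofReal (b₁ z₁ * b₂ z₂ * ‖z₁ - z₂‖ ^ (-β))) ≤ G₂ * B₁ := by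
    have hsec : ∀ z₂ : E, (∫⁻ z₁ : E, ENNReal.ofReal (b₁ z₁ * b₂ z₂ * ‖z₁ - z₂‖ ^ (-β)))
        ≤ ENNReal.ofReal (b₂ z₂) * B₁ := by
      intro z₂
      have hre : ∀ z₁ : E, ENNReal.ofReal (b₁ z₁ * b₂ z₂ * ‖z₁ - z₂‖ ^ (-β))
          = ENNReal.ofReal (b₂ z₂) * ENNReal.ofReal (b₁ z₁ * ‖z₁ - z₂‖ ^ (-β)) := by
        intro z₁
        rw [← ENNReal.ofReal_mul (hb₂pos z₂).le]
        congr 1; ring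
      simp_rw [hre]
      rw [lintegral_const_mul' _ _ ofReal_ne_top]
      exact mul_le_mul_right (inner_bound z₂) _
    calc (∫⁻ z₂ : E, ∫⁻ z₁ : E, ENNReal.ofReal (b₁ z₁ * b₂ z₂ * ‖z₁ - z₂‖ ^ (-β)))
        ≤ ∫⁻ z₂ : E, ENNReal.ofReal (b₂ z₂) * B₁ := lintegral_mono hsec
      _ = (∫⁻ z₂ : E, ENNReal.ofReal (b₂ z₂)) * B₁ := lintegral_mul_const' _ _ hB₁top
      _ = G₂ * B₁ := by rw [hb₂def, gauss_lintegral d t₂ ht₂ a₂, hG₂def]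
  have hJ : (∫⁻ z₁ : E, ∫⁻ z₂ : E,
      ENNReal.ofReal (b₁ z₁ * b₂ z₂ * ‖z₁ - z₂‖ ^ (-β))) ≤ G₂ * B₁ := by
    rw [lintegral_lintegral_swap hFmeas.aemeasurable]
    exact swapped_bound
  -- from Bochner to lintegral
  have step1 : ∀ z₁ : E, (∫ z₂ : E, b₁ z₁ * b₂ z₂ * ‖z₁ - z₂‖ ^ (-β))
      = (∫⁻ z₂ : E, ENNReal.ofReal (b₁ z₁ * b₂ z₂ * ‖z₁ - z₂‖ ^ (-β))).toReal := by
    intro z₁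
    rw [integral_eq_lintegral_of_nonneg_ae
      (Filter.Eventually.of_forall fun z₂ => hfnonneg z₁ z₂)
      (((((hb₁meas.comp measurable_fst).mul (hb₂meas.comp measurable_snd)).mul hKer).comp
        measurable_prodMk_left).aestronglyMeasurable)]
  have hg_meas : Measurable fun z₁ : E =>
      ∫⁻ z₂ : E, ENNReal.ofReal (b₁ z₁ * b₂ z₂ * ‖z₁ - z₂‖ ^ (-β)) :=
    Measurable.lintegral_prod_right hFmeas
  have step2 : (∫ z₁ : E, ∫ z₂ : E, b₁ z₁ * b₂ z₂ * ‖z₁ - z₂‖ ^ (-β))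
      ≤ (G₂ * B₁).toReal := by
    simp_rw [step1]
    rw [integral_eq_lintegral_of_nonneg_ae
      (Filter.Eventually.of_forall fun z₁ => ENNReal.toReal_nonneg)
      hg_meas.ennreal_toReal.aestronglyMeasurable]
    apply ENNReal.toReal_mono (ENNReal.mul_ne_top ofReal_ne_top hB₁top)
    refine le_trans (lintegral_mono fun z₁ => ENNReal.ofReal_toReal_le) hJ
  -- real arithmetic
  have hε2 : (0:ℝ) < ε ^ 2 := by positivity
  have hd1 : (0:ℝ) ≤ ((d:ℝ) - 1) / 2 := by
    have : (1:ℝ) ≤ (d:ℝ) := by exact_mod_cast hd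
    linarith
  have hkey2 : t₁ ^ (((d:ℝ) - 1) / 2) * t₂ ^ (((d:ℝ) - 1) / 2) ≤ ε ^ (2 * d - 2) := by
    have h1 : t₁ ^ (((d:ℝ) - 1) / 2) ≤ (ε ^ 2) ^ (((d:ℝ) - 1) / 2) :=
      Real.rpow_le_rpow ht₁.le ht1ε hd1
    have h2 : t₂ ^ (((d:ℝ) - 1) / 2) ≤ (ε ^ 2) ^ (((d:ℝ) - 1) / 2) :=
      Real.rpow_le_rpow ht₂.le (ht21.trans ht1ε) hd1
    have h3 : t₁ ^ (((d:ℝ) - 1) / 2) * t₂ ^ (((d:ℝ) - 1) / 2)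
        ≤ (ε ^ 2) ^ (((d:ℝ) - 1) / 2) * (ε ^ 2) ^ (((d:ℝ) - 1) / 2) :=
      mul_le_mul h1 h2 (Real.rpow_nonneg ht₂.le _) (Real.rpow_nonneg hε2.le _)
    refine h3.trans (le_of_eq ?_)
    rw [← Real.rpow_add hε2]
    have hc : ((2 * d - 2 : ℕ) : ℝ) = 2 * ((d:ℝ) - 1) := by
      rw [Nat.cast_sub (by omega : 2 ≤ 2 * d)]
      push_cast; ring
    rw [← Real.rpow_natCast ε (2 * d - 2), hc, ← Real.rpow_natCast ε 2,
      ← Real.rpow_mul hε0.le]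
    congr 1
    push_cast; ring
  have key : t₁ ^ (((d:ℝ) - β) / 2) * t₂ ^ ((d:ℝ) / 2) * (t₁ * t₂)⁻¹
      ≤ ε ^ (2 * d - 2) * t₁ ^ (-(1 + β) / 2) * t₂ ^ (-(1:ℝ) / 2) := by
    have e2 : t₁ ^ (((d:ℝ) - β) / 2) * t₂ ^ ((d:ℝ) / 2) * (t₁ * t₂)⁻¹
        = (t₁ ^ (((d:ℝ) - 1) / 2) * t₂ ^ (((d:ℝ) - 1) / 2))
            * (t₁ ^ (-(1 + β) / 2) * t₂ ^ (-(1:ℝ) / 2)) := by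
      rw [mul_inv, ← Real.rpow_neg_one t₁, ← Real.rpow_neg_one t₂,
        show t₁ ^ (((d:ℝ) - β) / 2) * t₂ ^ ((d:ℝ) / 2) * (t₁ ^ (-1:ℝ) * t₂ ^ (-1:ℝ))
          = (t₁ ^ (((d:ℝ) - β) / 2) * t₁ ^ (-1:ℝ)) * (t₂ ^ ((d:ℝ) / 2) * t₂ ^ (-1:ℝ)) from by
            ring,
        ← Real.rpow_add ht₁, ← Real.rpow_add ht₂,
        show (t₁ ^ (((d:ℝ) - 1) / 2) * t₂ ^ (((d:ℝ) - 1) / 2))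
            * (t₁ ^ (-(1 + β) / 2) * t₂ ^ (-(1:ℝ) / 2))
          = (t₁ ^ (((d:ℝ) - 1) / 2) * t₁ ^ (-(1 + β) / 2))
            * (t₂ ^ (((d:ℝ) - 1) / 2) * t₂ ^ (-(1:ℝ) / 2)) from by ring,
        ← Real.rpow_add ht₁, ← Real.rpow_add ht₂]
      congr 1
      · congr 1; ring
      · congr 1; ring
    rw [e2]
    calc (t₁ ^ (((d:ℝ) - 1) / 2) * t₂ ^ (((d:ℝ) - 1) / 2))
          * (t₁ ^ (-(1 + β) / 2) * t₂ ^ (-(1:ℝ) / 2))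
        ≤ ε ^ (2 * d - 2) * (t₁ ^ (-(1 + β) / 2) * t₂ ^ (-(1:ℝ) / 2)) :=
          mul_le_mul_of_nonneg_right hkey2 (by positivity)
      _ = ε ^ (2 * d - 2) * t₁ ^ (-(1 + β) / 2) * t₂ ^ (-(1:ℝ) / 2) := by ring
  -- compute (G₂ * B₁).toReal
  have e1 : (G₂ * B₁).toReal = (2 * π * t₂) ^ ((d:ℝ) / 2)
      * (R ^ ((d:ℝ) - β) * Cr + t₁ ^ (-β / 2) * (2 * π * t₁) ^ ((d:ℝ) / 2)) := by
    rw [ENNReal.toReal_mul, hG₂def, ENNReal.toReal_ofReal (Real.rpow_nonneg (by positivity) _),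
      hB₁def, ENNReal.toReal_add (ENNReal.mul_ne_top ofReal_ne_top hCtop)
        (ENNReal.mul_ne_top ofReal_ne_top ofReal_ne_top),
      ENNReal.toReal_mul, ENNReal.toReal_mul,
      ENNReal.toReal_ofReal (Real.rpow_nonneg hR.le _),
      ENNReal.toReal_ofReal (Real.rpow_nonneg ht₁.le _)]
    rw [ENNReal.toReal_ofReal (Real.rpow_nonneg (by positivity : (0:ℝ) ≤ 2 * π * t₁) _), hCrdef]
  have hRpow : R ^ ((d:ℝ) - β) = t₁ ^ (((d:ℝ) - β) / 2) := by
    rw [hRdef, Real.sqrt_eq_rpow, ← Real.rpow_mul ht₁.le]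
    congr 1; ring
  have hsplit1 : (2 * π * t₁) ^ ((d:ℝ) / 2) = P * t₁ ^ ((d:ℝ) / 2) := by
    rw [hPdef, ← Real.mul_rpow hπ.le ht₁.le]
  have hsplit2 : (2 * π * t₂) ^ ((d:ℝ) / 2) = P * t₂ ^ ((d:ℝ) / 2) := by
    rw [hPdef, ← Real.mul_rpow hπ.le ht₂.le]
  have hmerge : t₁ ^ (-β / 2) * t₁ ^ ((d:ℝ) / 2) = t₁ ^ (((d:ℝ) - β) / 2) := by
    rw [← Real.rpow_add ht₁]
    congr 1; ring
  have e3 : (G₂ * B₁).toReal = (P * (Cr + P))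
      * (t₁ ^ (((d:ℝ) - β) / 2) * t₂ ^ ((d:ℝ) / 2)) := by
    rw [e1, hRpow, hsplit1, hsplit2,
      show t₁ ^ (-β / 2) * (P * t₁ ^ ((d:ℝ) / 2)) = (t₁ ^ (-β / 2) * t₁ ^ ((d:ℝ) / 2)) * P
        from by ring, hmerge]
    ring
  -- assemble
  have hinv : (0:ℝ) ≤ (t₁ * t₂)⁻¹ := by positivity
  calc (t₁ * t₂)⁻¹ * (∫ z₁ : E, ∫ z₂ : E, b₁ z₁ * b₂ z₂ * ‖z₁ - z₂‖ ^ (-β))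
      ≤ (t₁ * t₂)⁻¹ * (G₂ * B₁).toReal := mul_le_mul_of_nonneg_left step2 hinv
    _ = (P * (Cr + P)) * (t₁ ^ (((d:ℝ) - β) / 2) * t₂ ^ ((d:ℝ) / 2) * (t₁ * t₂)⁻¹) := by
        rw [e3]; ring
    _ ≤ (P * (Cr + P)) * (ε ^ (2 * d - 2) * t₁ ^ (-(1 + β) / 2) * t₂ ^ (-(1:ℝ) / 2)) :=
        mul_le_mul_of_nonneg_left key (by positivity)
    _ = P * (Cr + P) * ε ^ (2 * d - 2) * t₁ ^ (-(1 + β) / 2) * t₂ ^ (-(1:ℝ) / 2) := by ring
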